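/- Let R ∈ ℂ^{T×T} be Hermitian positive semidefinite and let h ∈ ℂ^T be such that the (real) number h^H R h is strictly positive. Define ŵ := (h^H R h)^{−1/2} · R h ∈ ℂ^T. Then (i) |h^H ŵ|² = h^H R h, and (ii) the matrix R − ŵ ŵ^H is positive semidefinite. -/

import Mathlib

open Matrix ComplexOrder

lemma cs_dot {n : ℕ} (u v : Fin n → ℂ) :
    ‖star u ⬝ᵥ v‖ ^ 2 ≤ (star u ⬝ᵥ u).re * (star v ⬝ᵥ v).re := by
  let u' : EuclideanSpace ℂ (Fin n) := (WithLp.equiv 2 _).symm u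
  let v' : EuclideanSpace ℂ (Fin n) := (WithLp.equiv 2 _).symm v
  have h1 : ‖@inner ℂ _ _ u' v'‖ * ‖@inner ℂ _ _ v' u'‖
      ≤ Complex.re (@inner ℂ _ _ u' u') * Complex.re (@inner ℂ _ _ v' v') :=
    inner_mul_inner_self_le u' v'
  have e1 : @inner ℂ _ _ u' v' = star u ⬝ᵥ v := by rw [dotProduct_comm]; rfl
  have e2 : @inner ℂ _ _ v' u' = star v ⬝ᵥ u := by rw [dotProduct_comm]; rfl
  have e3 : @inner ℂ _ _ u' u' = star u ⬝ᵥ u := by rw [dotProduct_comm]; rfl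
  have e4 : @inner ℂ _ _ v' v' = star v ⬝ᵥ v := by rw [dotProduct_comm]; rfl
  rw [e1, e2, e3, e4] at h1
  have : star v ⬝ᵥ u = star (star u ⬝ᵥ v) := by
    rw [star_dotProduct]
  rw [this, norm_star] at h1
  simpa [sq] using h1

lemma cs_psd {n : ℕ} {R : Matrix (Fin n) (Fin n) ℂ} (hR : R.PosSemidef)
    (x y : Fin n → ℂ) :
    ‖star x ⬝ᵥ R.mulVec y‖ ^ 2
      ≤ (star x ⬝ᵥ R.mulVec x).re * (star y ⬝ᵥ R.mulVec y).re := by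
  obtain ⟨B, rfl⟩ : ∃ B : Matrix (Fin n) (Fin n) ℂ, R = Bᴴ * B := by
    open scoped MatrixOrder in exact CStarAlgebra.nonneg_iff_eq_star_mul_self.mp hR.nonneg
  have key : ∀ a b : Fin n → ℂ,
      star a ⬝ᵥ (Bᴴ * B).mulVec b = star (B.mulVec a) ⬝ᵥ (B.mulVec b) := by
    intro a b
    rw [star_mulVec, ← Matrix.mulVec_mulVec, Matrix.dotProduct_mulVec]
  rw [key, key, key]
  exact cs_dot _ _

/-- for Hermitian PSD R and h with h^H R h > 0, the vector
ŵ := (h^H R h)^{−1/2} R h satisfies |h^H ŵ|² = h^H R h and R − ŵ ŵ^H ⪰ 0. -/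
theorem sdr_rank_one_extraction (T : ℕ) (R : Matrix (Fin T) (Fin T) ℂ)
    (hR : R.PosSemidef) (h : Fin T → ℂ)
    (hpos : 0 < (star h ⬝ᵥ R.mulVec h).re)
    (what : Fin T → ℂ)
    (hwhat : what = fun i =>
      ((Real.sqrt ((star h ⬝ᵥ R.mulVec h).re))⁻¹ : ℂ) * R.mulVec h i) :
    ((‖star h ⬝ᵥ what‖ ^ 2 : ℝ) : ℂ) = star h ⬝ᵥ R.mulVec h
      ∧ (R - vecMulVec what (star what)).PosSemidef := by
  set s : ℝ := (star h ⬝ᵥ R.mulVec h).re with hs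
  have hnn := hR.dotProduct_mulVec_nonneg h
  have him : (star h ⬝ᵥ R.mulVec h).im = 0 := by
    have := (Complex.le_def.mp hnn).2
    simpa using this.symm
  have hsR : star h ⬝ᵥ R.mulVec h = (s : ℂ) := by
    apply Complex.ext <;> simp [hs, him]
  have hsqrt : Real.sqrt s > 0 := Real.sqrt_pos.mpr hpos
  set c : ℂ := ((Real.sqrt s : ℂ))⁻¹ with hc
  have hwhat' : what = c • (R.mulVec h) := by
    funext i; rw [hwhat]; simp [hc, Complex.ofReal_inv]
  -- the dot product formula
  have hdot : ∀ x : Fin T → ℂ, star x ⬝ᵥ what = c * (star x ⬝ᵥ R.mulVec h) := by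
    intro x
    rw [hwhat']
    simp [dotProduct, Finset.mul_sum]
    ring_nf
    apply Finset.sum_congr rfl
    intros; ring
  constructor
  · rw [hdot h, hsR]
    have : ‖c * (s : ℂ)‖ = (Real.sqrt s)⁻¹ * s := by
      simp [hc, abs_of_nonneg (le_of_lt hpos)]
    rw [this]
    norm_cast
    rw [mul_pow, inv_pow, Real.sq_sqrt hpos.le]
    field_simp
  · refine Matrix.PosSemidef.of_dotProduct_mulVec_nonneg ?_ ?_
    · have hW : (vecMulVec what (star what)).IsHermitian := by
        ext i j
        simp [Matrix.conjTranspose_apply, vecMulVec_apply, mul_comm]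
      exact hR.1.sub hW
    · intro x
      have hWx : star x ⬝ᵥ (vecMulVec what (star what)).mulVec x
          = (star x ⬝ᵥ what) * (star what ⬝ᵥ x) := by
        simp [dotProduct, Matrix.mulVec, vecMulVec_apply, Finset.mul_sum, Finset.sum_mul]
        rw [Finset.sum_comm]
        apply Finset.sum_congr rfl; intros
        apply Finset.sum_congr rfl; intros; ring
      have hconj : star what ⬝ᵥ x = star (star x ⬝ᵥ what) := by
        rw [star_dotProduct]
      have hterm : star x ⬝ᵥ (vecMulVec what (star what)).mulVec x
          = (Complex.normSq (star x ⬝ᵥ what) : ℂ) := by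
        rw [hWx, hconj]
        exact Complex.mul_conj _
      have hRx := hR.dotProduct_mulVec_nonneg x
      have hRxim : (star x ⬝ᵥ R.mulVec x).im = 0 := by
        have := (Complex.le_def.mp hRx).2; simpa using this.symm
      have hRxre : star x ⬝ᵥ R.mulVec x = ((star x ⬝ᵥ R.mulVec x).re : ℂ) := by
        apply Complex.ext <;> simp [hRxim]
      rw [Matrix.sub_mulVec, dotProduct_sub, hterm, hRxre]
      have hkey : Complex.normSq (star x ⬝ᵥ what) ≤ (star x ⬝ᵥ R.mulVec x).re := by
        rw [hdot x]
        rw [Complex.normSq_mul]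
        have hcns : Complex.normSq c = s⁻¹ := by
          simp [hc, Complex.normSq_ofReal]
          rw [← mul_inv, Real.mul_self_sqrt hpos.le]
        rw [hcns, Complex.normSq_eq_norm_sq]
        have := cs_psd hR x h
        calc s⁻¹ * ‖star x ⬝ᵥ R.mulVec h‖ ^ 2
            ≤ s⁻¹ * ((star x ⬝ᵥ R.mulVec x).re * s) := by
              apply mul_le_mul_of_nonneg_left this (by positivity)
          _ = (star x ⬝ᵥ R.mulVec x).re := by field_simp
      rw [← Complex.ofReal_sub]
      rw [Complex.zero_le_real]
      linarith
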